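/- For any real d ≥ 1 (d an integer) and any real 0 ≤ λ ≤ 1, it holds that λ(1 − λ^d) ≤ 2 · (λ^{d+1}(1 − λ))^{1/(d+1)}. -/

import Mathlib

/-- For any integer `d ≥ 1` and any real `0 ≤ λ ≤ 1`,
`λ(1 − λ^d) ≤ 2 · (λ^{d+1}(1 − λ))^{1/(d+1)}`. -/
theorem lam_one_sub_pow_le (d : ℕ) (hd : 1 ≤ d)
    (lam : ℝ) (h0 : 0 ≤ lam) (h1 : lam ≤ 1) :
    lam * (1 - lam ^ d) ≤
      2 * (lam ^ (d + 1) * (1 - lam)) ^ ((1 : ℝ) / (d + 1)) := by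
  have hlampow : lam ^ d ≤ 1 := pow_le_one₀ h0 h1
  have hx : 0 ≤ lam * (1 - lam ^ d) := mul_nonneg h0 (by linarith)
  have hy : 0 ≤ lam ^ (d + 1) * (1 - lam) :=
    mul_nonneg (pow_nonneg h0 _) (by linarith)
  have hexp : (0:ℝ) < (d:ℝ) + 1 := by positivity
  have hsum : 1 - lam ^ d ≤ d * (1 - lam) := by
    clear hd hlampow hx hy hexp
    induction d with
    | zero => simp
    | succ n ih =>
      have hn : lam ^ n ≤ 1 := pow_le_one₀ h0 h1
      have h2 : lam ^ n * (1 - lam) ≤ 1 - lam :=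
        mul_le_of_le_one_left (by linarith) hn
      push_cast
      have heq : 1 - lam ^ (n + 1) = (1 - lam ^ n) + lam ^ n * (1 - lam) := by ring
      rw [heq]
      push_cast at ih ⊢
      nlinarith
  have key : (lam * (1 - lam ^ d)) ^ (d + 1) ≤ d * (lam ^ (d + 1) * (1 - lam)) := by
    have h1' : (1 - lam ^ d) ^ (d + 1) ≤ 1 - lam ^ d :=
      pow_le_of_le_one (by linarith) (by nlinarith [pow_nonneg h0 d]) (Nat.succ_ne_zero d)
    calc (lam * (1 - lam ^ d)) ^ (d + 1)
        = lam ^ (d + 1) * (1 - lam ^ d) ^ (d + 1) := by rw [mul_pow]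
      _ ≤ lam ^ (d + 1) * (1 - lam ^ d) :=
          mul_le_mul_of_nonneg_left h1' (pow_nonneg h0 _)
      _ ≤ lam ^ (d + 1) * (d * (1 - lam)) :=
          mul_le_mul_of_nonneg_left hsum (pow_nonneg h0 _)
      _ = d * (lam ^ (d + 1) * (1 - lam)) := by ring
  have h2 : lam * (1 - lam ^ d)
      ≤ ((d:ℝ) * (lam ^ (d + 1) * (1 - lam))) ^ ((1:ℝ)/((d:ℝ)+1)) := by
    calc lam * (1 - lam ^ d)
        = ((lam * (1 - lam ^ d)) ^ (d + 1 : ℕ)) ^ ((1:ℝ)/((d:ℝ)+1)) := by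
          rw [← Real.rpow_natCast (lam * (1 - lam ^ d)) (d + 1),
            ← Real.rpow_mul hx]
          push_cast
          rw [mul_one_div, div_self hexp.ne', Real.rpow_one]
      _ ≤ ((d:ℝ) * (lam ^ (d + 1) * (1 - lam))) ^ ((1:ℝ)/((d:ℝ)+1)) :=
          Real.rpow_le_rpow (pow_nonneg hx _) key (by positivity)
  have hd2 : (d:ℝ) ^ ((1:ℝ)/((d:ℝ)+1)) ≤ 2 := by
    have hdle : (d:ℝ) ≤ (2:ℝ) ^ ((d:ℝ) + 1) := by
      have h2eq : (2:ℝ) ^ ((d:ℝ) + 1) = ((2 ^ (d + 1) : ℕ) : ℝ) := by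
        rw [show ((d:ℝ) + 1) = ((d + 1 : ℕ) : ℝ) by push_cast; ring,
          Real.rpow_natCast]
        push_cast
        ring
      rw [h2eq]
      exact_mod_cast Nat.le_of_lt (Nat.lt_of_lt_of_le (Nat.lt_two_pow_self (n := d))
        (Nat.pow_le_pow_right (by norm_num) (Nat.le_succ d)))
    calc (d:ℝ) ^ ((1:ℝ)/((d:ℝ)+1))
        ≤ ((2:ℝ) ^ ((d:ℝ)+1)) ^ ((1:ℝ)/((d:ℝ)+1)) :=
          Real.rpow_le_rpow (Nat.cast_nonneg d) hdle (by positivity)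
      _ = 2 := by
          rw [← Real.rpow_mul (by norm_num), mul_one_div, div_self hexp.ne',
            Real.rpow_one]
  calc lam * (1 - lam ^ d)
      ≤ ((d:ℝ) * (lam ^ (d + 1) * (1 - lam))) ^ ((1:ℝ)/((d:ℝ)+1)) := h2
    _ = (d:ℝ) ^ ((1:ℝ)/((d:ℝ)+1)) * (lam ^ (d + 1) * (1 - lam)) ^ ((1:ℝ)/((d:ℝ)+1)) :=
        Real.mul_rpow (Nat.cast_nonneg d) hy
    _ ≤ 2 * (lam ^ (d + 1) * (1 - lam)) ^ ((1:ℝ)/((d:ℝ)+1)) :=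
        mul_le_mul_of_nonneg_right hd2 (Real.rpow_nonneg hy _)
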